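/- Let n : ℕ and v = (v₁, v₂, v₃) ∈ (Fin n → ℂ) × ℂ × ℂ with ∑_i (v₁ i)² + v₂² + v₃² = 0. Suppose λ := (v₂ − Complex.I * v₃) / 2 ≠ 0. Define Z ∈ (Fin n → ℂ) by Z i = v₁ i / (2 * Complex.I * λ). Then v = λ • ξ(Z), i.e. v₁ i = λ * (2 * Complex.I * Z i) for all i, v₂ = λ * (1 + q(Z)), and v₃ = λ * (Complex.I * (1 − q(Z))), where q(Z) = ∑_i (Z i)² and ξ(Z) = (fun i => 2 * Complex.I * Z i, 1 + q(Z), Complex.I * (1 − q(Z))). -/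

import Mathlib

/-- Every `b`-null vector `v = (v₁,v₂,v₃)` with `λ = (v₂ − i v₃)/2 ≠ 0` is the scalar
multiple `λ • ξ(Z)` of a point in the image of the Harish-Chandra embedding `ξ`, where
`Z i = v₁ i / (2 i λ)`. -/
theorem stmt_11 (n : ℕ) (v₁ : Fin n → ℂ) (v₂ v₃ : ℂ)
    (hnull : (∑ i, (v₁ i) ^ 2) + v₂ ^ 2 + v₃ ^ 2 = 0)
    (l : ℂ) (hl : l = (v₂ - Complex.I * v₃) / 2) (hl0 : l ≠ 0)
    (Z : Fin n → ℂ) (hZ : ∀ i, Z i = v₁ i / (2 * Complex.I * l))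
    (q : ℂ) (hq : q = ∑ i, (Z i) ^ 2) :
    (∀ i, v₁ i = l * (2 * Complex.I * Z i)) ∧
    v₂ = l * (1 + q) ∧
    v₃ = l * (Complex.I * (1 - q)) := by
  have hI2 : Complex.I ^ 2 = -1 := Complex.I_sq
  have h2 : (2 * Complex.I * l) ≠ 0 := by
    simp [hl0, Complex.I_ne_zero]
  have hs : (∑ i, (v₁ i) ^ 2) = -(v₂ ^ 2 + v₃ ^ 2) := by linear_combination hnull
  have hq' : q = -(v₂ ^ 2 + v₃ ^ 2) / (2 * Complex.I * l) ^ 2 := by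
    rw [hq]
    have : ∀ i, (Z i) ^ 2 = (v₁ i) ^ 2 / (2 * Complex.I * l) ^ 2 := by
      intro i; rw [hZ i]; ring
    rw [Finset.sum_congr rfl fun i _ => this i, ← Finset.sum_div, hs]
  have hk' : q * (2 * Complex.I * l) ^ 2 = -(v₂ ^ 2 + v₃ ^ 2) := by
    rw [hq']; field_simp
  have hk : 4 * l ^ 2 * q = v₂ ^ 2 + v₃ ^ 2 := by
    linear_combination -hk' + 4 * l ^ 2 * q * hI2
  have h3 : v₃ = Complex.I * (2 * l - v₂) := by
    rw [hl]; linear_combination v₃ * hI2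
  have h4l0 : (4 : ℂ) * l ≠ 0 := by simp [hl0]
  have h4 : (4 * l) * (l * q) = (4 * l) * (v₂ - l) := by
    linear_combination hk + (v₃ + Complex.I * (2 * l - v₂)) * h3 + (2 * l - v₂) ^ 2 * hI2
  have hlq : l * q = v₂ - l := mul_left_cancel₀ h4l0 h4
  refine ⟨fun i => ?_, ?_, ?_⟩
  · rw [hZ i]; field_simp
  · linear_combination -hlq
  · linear_combination h3 + Complex.I * hlq
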